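/- Let σ be a sequence of length n and suppose R' is a set of indices such that every index j not in R' satisfies: for all k < j, |[k, j) ∩ inv(j)| ≤ (1/2 + 2ε')(j - k), where 0 < ε' < 1/4. Then there exists a non-decreasing subsequence of σ of length at least n - |R'|/(1/2 - 2ε'). Equivalently, ed(σ) ≤ |R'|/(1/2 - 2ε'). -/

import Mathlib

/-- A sequence is non-decreasing on an index set `S`. -/
def MonoOn {n : ℕ} {α : Type*} [Preorder α] (σ : Fin n → α) (S : Finset (Fin n)) : Prop :=
  ∀ i ∈ S, ∀ j ∈ S, i ≤ j → σ i ≤ σ j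

/-- Length of the longest non-decreasing subsequence. -/
noncomputable def lisLen {n : ℕ} {α : Type*} [Preorder α] (σ : Fin n → α) : ℕ :=
  sSup {k | ∃ S : Finset (Fin n), S.card = k ∧ MonoOn σ S}

/-- Edit distance to monotonicity: minimum number of deletions leaving a
non-decreasing subsequence. -/
noncomputable def edDist {n : ℕ} {α : Type*} [Preorder α] (σ : Fin n → α) : ℕ :=
  sInf {k | ∃ S : Finset (Fin n), S.card = k ∧ MonoOn σ Sᶜ}

private lemma count_bound {n : ℕ} (σ : Fin n → ℕ) (ε' : ℝ)
    (R' : Finset (Fin n))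
    (h : ∀ j : Fin n, j ∉ R' → ∀ k : Fin n, k < j →
        (((Finset.Ico k j).filter (fun i => σ j < σ i)).card : ℝ) ≤
          (1/2 + 2*ε') * (((j : ℕ) : ℝ) - ((k : ℕ) : ℝ)))
    (x : Fin n) (hx : x ∉ R') (k : Fin n) (hkx : k < x)
    (hbig : ∀ i : Fin n, k ≤ i → i < x → i ∉ R' → σ x < σ i) :
    (1/2 - 2*ε') * (((x:ℕ):ℝ) - ((k:ℕ):ℝ)) ≤
      ((R'.filter (fun i => k ≤ i ∧ i < x)).card : ℝ) := by
  classical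
  set I : Finset (Fin n) := Finset.Ico k x with hI
  have hcard : (I.card : ℝ) = ((x:ℕ):ℝ) - ((k:ℕ):ℝ) := by
    rw [hI, Fin.card_Ico, Nat.cast_sub (le_of_lt hkx)]
  have hsplit : (I.filter (fun i => i ∈ R')).card
      + (I.filter (fun i => i ∉ R')).card = I.card :=
    Finset.card_filter_add_card_filter_not (fun i => i ∈ R')
  have h1 : I.filter (fun i => i ∉ R') ⊆ I.filter (fun i => σ x < σ i) := by
    intro i hi
    simp only [Finset.mem_filter, hI, Finset.mem_Ico] at hi ⊢
    exact ⟨hi.1, hbig i hi.1.1 hi.1.2 hi.2⟩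
  have h2 : I.filter (fun i => i ∈ R') ⊆ R'.filter (fun i => k ≤ i ∧ i < x) := by
    intro i hi
    simp only [Finset.mem_filter, hI, Finset.mem_Ico] at hi ⊢
    exact ⟨hi.2, hi.1⟩
  have h1' : ((I.filter (fun i => i ∉ R')).card : ℝ)
      ≤ (1/2 + 2*ε') * (((x:ℕ):ℝ) - ((k:ℕ):ℝ)) :=
    le_trans (by exact_mod_cast Finset.card_le_card h1) (h x hx k hkx)
  have h2' : ((I.filter (fun i => i ∈ R')).card : ℝ)
      ≤ ((R'.filter (fun i => k ≤ i ∧ i < x)).card : ℝ) := by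
    exact_mod_cast Finset.card_le_card h2
  have hs : ((I.filter (fun i => i ∈ R')).card : ℝ)
      + ((I.filter (fun i => i ∉ R')).card : ℝ) = (I.card : ℝ) := by
    exact_mod_cast hsplit
  linarith

private lemma main_aux {n : ℕ} (σ : Fin n → ℕ) (ε' : ℝ)
    (R' : Finset (Fin n))
    (h : ∀ j : Fin n, j ∉ R' → ∀ k : Fin n, k < j →
        (((Finset.Ico k j).filter (fun i => σ j < σ i)).card : ℝ) ≤
          (1/2 + 2*ε') * (((j : ℕ) : ℝ) - ((k : ℕ) : ℝ))) :
    ∀ m : ℕ, ∀ x : Fin n, (x : ℕ) = m → x ∉ R' →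
      ∃ S : Finset (Fin n), x ∈ S ∧ (∀ i ∈ S, i ≤ x) ∧ MonoOn σ S ∧
        (1/2 - 2*ε') * (((x:ℕ):ℝ) + 1 - (S.card : ℝ)) ≤
          ((R'.filter (fun i => i ≤ x)).card : ℝ) := by
  classical
  intro m
  induction m using Nat.strong_induction_on with
  | _ m IH =>
    intro x hxm hx
    set C : Finset (Fin n) := Finset.univ.filter (fun i => i < x ∧ i ∉ R' ∧ σ i ≤ σ x) with hC
    by_cases hCne : C.Nonempty
    · -- Case A: there is a good j below x
      set j : Fin n := C.max' hCne with hj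
      have hjmem : j ∈ C := C.max'_mem hCne
      rw [hC, Finset.mem_filter] at hjmem
      obtain ⟨-, hjx, hjR, hjσ⟩ := hjmem
      have hmax : ∀ i : Fin n, i < x → i ∉ R' → σ i ≤ σ x → i ≤ j := by
        intro i h1 h2 h3
        apply Finset.le_max' C i
        rw [hC, Finset.mem_filter]
        exact ⟨Finset.mem_univ i, h1, h2, h3⟩
      have hjxn : (j : ℕ) < (x : ℕ) := hjx
      obtain ⟨S₀, hjS₀, hle₀, hmono₀, hbound₀⟩ := IH (j : ℕ) (by omega) j rfl hjR
      refine ⟨insert x S₀, Finset.mem_insert_self x S₀, ?_, ?_, ?_⟩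
      · intro i hi
        rcases Finset.mem_insert.mp hi with rfl | hi
        · exact le_refl i
        · exact le_trans (hle₀ i hi) (le_of_lt hjx)
      · intro a ha b hb hab
        rcases Finset.mem_insert.mp ha with ha' | ha'
        · -- a = x
          rcases Finset.mem_insert.mp hb with hb' | hb'
          · subst ha'; subst hb'; exact le_refl _
          · subst ha'
            have h1 : (a : ℕ) ≤ (j : ℕ) := le_trans hab (hle₀ b hb')
            have h2 : (j : ℕ) < (a : ℕ) := hjx
            omega
        · rcases Finset.mem_insert.mp hb with hb' | hb'
          · subst hb'
            exact le_trans (hmono₀ a ha' j hjS₀ (hle₀ a ha')) hjσ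
          · exact hmono₀ a ha' b hb' hab
      · -- the counting bound
        have hxS₀ : x ∉ S₀ := fun hmem => absurd (hle₀ x hmem) (not_le.mpr hjx)
        have hcard : ((insert x S₀).card : ℝ) = (S₀.card : ℝ) + 1 := by
          rw [Finset.card_insert_of_notMem hxS₀]; push_cast; ring
        -- bound on the interval (j, x)
        have hgap : (1/2 - 2*ε') * (((x:ℕ):ℝ) - ((j:ℕ):ℝ) - 1) ≤
            ((R'.filter (fun i => j < i ∧ i ≤ x)).card : ℝ) := by
          by_cases hadj : (j : ℕ) + 1 = (x : ℕ)
          · have : (((x:ℕ):ℝ) - ((j:ℕ):ℝ) - 1) = 0 := by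
              rw [← hadj]; push_cast; ring
            rw [this, mul_zero]
            positivity
          · -- j+1 < x
            have hk1 : (j : ℕ) + 1 < n := lt_of_le_of_lt (by omega) x.isLt
            set k : Fin n := ⟨(j : ℕ) + 1, hk1⟩ with hk
            have hkxlt : k < x := by
              show (k : ℕ) < (x : ℕ); simp [hk]; omega
            have hbig : ∀ i : Fin n, k ≤ i → i < x → i ∉ R' → σ x < σ i := by
              intro i h1 h2 h3
              by_contra hle
              have := hmax i h2 h3 (not_lt.mp hle)
              have h1' : (j : ℕ) + 1 ≤ (i : ℕ) := h1
              have h2' : (i : ℕ) ≤ (j : ℕ) := this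
              omega
            have hcb := count_bound σ ε' R' h x hx k hkxlt hbig
            have heq : R'.filter (fun i => k ≤ i ∧ i < x) =
                R'.filter (fun i => j < i ∧ i ≤ x) := by
              apply Finset.filter_congr
              intro i hi
              constructor
              · rintro ⟨h1, h2⟩
                refine ⟨?_, le_of_lt h2⟩
                have : (j:ℕ) + 1 ≤ (i:ℕ) := h1
                show (j:ℕ) < (i:ℕ); omega
              · rintro ⟨h1, h2⟩
                have hix : (i:ℕ) < (x:ℕ) := by
                  have h2' : (i:ℕ) ≤ (x:ℕ) := h2
                  rcases eq_or_lt_of_le h2' with heq2 | h2''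
                  · exact absurd (Fin.ext heq2 : i = x) (fun hh => hx (hh ▸ hi))
                  · exact h2''
                refine ⟨?_, hix⟩
                show (k:ℕ) ≤ (i:ℕ)
                have h1' : (j:ℕ) < (i:ℕ) := h1
                simp [hk]; omega
            rw [heq] at hcb
            have : ((k:ℕ):ℝ) = ((j:ℕ):ℝ) + 1 := by rw [hk]; norm_num
            rw [this] at hcb
            linarith
        -- combine with IH bound
        have hdisj : Disjoint (R'.filter (fun i => i ≤ j))
            (R'.filter (fun i => j < i ∧ i ≤ x)) := by
          rw [Finset.disjoint_left]
          intro i hi1 hi2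
          rw [Finset.mem_filter] at hi1 hi2
          exact absurd hi1.2 (not_le.mpr hi2.2.1)
        have hsub : (R'.filter (fun i => i ≤ j)) ∪
            (R'.filter (fun i => j < i ∧ i ≤ x)) ⊆ R'.filter (fun i => i ≤ x) := by
          intro i hi
          rcases Finset.mem_union.mp hi with hi | hi <;>
            rw [Finset.mem_filter] at hi ⊢
          · exact ⟨hi.1, le_trans hi.2 (le_of_lt hjx)⟩
          · exact ⟨hi.1, hi.2.2⟩
        have hcards : (R'.filter (fun i => i ≤ j)).card +
            (R'.filter (fun i => j < i ∧ i ≤ x)).card ≤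
            (R'.filter (fun i => i ≤ x)).card := by
          rw [← Finset.card_union_of_disjoint hdisj]
          exact Finset.card_le_card hsub
        have hcards' : ((R'.filter (fun i => i ≤ j)).card : ℝ) +
            ((R'.filter (fun i => j < i ∧ i ≤ x)).card : ℝ) ≤
            ((R'.filter (fun i => i ≤ x)).card : ℝ) := by exact_mod_cast hcards
        rw [hcard]
        have : (1/2 - 2*ε') * (((x:ℕ):ℝ) + 1 - ((S₀.card : ℝ) + 1)) =
            (1/2 - 2*ε') * (((j:ℕ):ℝ) + 1 - (S₀.card : ℝ)) +
            (1/2 - 2*ε') * (((x:ℕ):ℝ) - ((j:ℕ):ℝ) - 1) := by ring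
        rw [this]
        linarith
    · -- Case B: no good j below x
      refine ⟨{x}, Finset.mem_singleton_self x, ?_, ?_, ?_⟩
      · intro i hi; rw [Finset.mem_singleton] at hi; exact le_of_eq hi
      · intro a ha b hb _
        rw [Finset.mem_singleton] at ha hb; subst ha; subst hb; exact le_refl _
      · rw [Finset.card_singleton]
        by_cases hx0 : (x : ℕ) = 0
        · have : ((x:ℕ):ℝ) + 1 - (1:ℕ) = 0 := by rw [hx0]; push_cast; ring
          rw [this, mul_zero]; positivity
        · have hn0 : 0 < n := lt_of_le_of_lt (Nat.zero_le _) x.isLt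
          set k : Fin n := ⟨0, hn0⟩ with hk
          have hkx : k < x := by show (k:ℕ) < (x:ℕ); simp [hk]; omega
          have hbig : ∀ i : Fin n, k ≤ i → i < x → i ∉ R' → σ x < σ i := by
            intro i _ h2 h3
            by_contra hle
            have hmem : i ∈ C := by
              rw [hC, Finset.mem_filter]
              exact ⟨Finset.mem_univ i, h2, h3, not_lt.mp hle⟩
            exact hCne ⟨i, hmem⟩
          have hcb := count_bound σ ε' R' h x hx k hkx hbig
          have hsub : R'.filter (fun i => k ≤ i ∧ i < x) ⊆ R'.filter (fun i => i ≤ x) := by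
            intro i hi
            rw [Finset.mem_filter] at hi ⊢
            exact ⟨hi.1, le_of_lt hi.2.2⟩
          have hcards : ((R'.filter (fun i => k ≤ i ∧ i < x)).card : ℝ) ≤
              ((R'.filter (fun i => i ≤ x)).card : ℝ) := by
            exact_mod_cast Finset.card_le_card hsub
          have hk0 : ((k:ℕ):ℝ) = 0 := by simp [hk]
          rw [hk0] at hcb
          push_cast
          linarith

theorem ed_le_of_pruning {n : ℕ} (σ : Fin n → ℕ) (ε' : ℝ) (hε0 : 0 < ε') (hε1 : ε' < 1/4)
    (R' : Finset (Fin n))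
    (h : ∀ j : Fin n, j ∉ R' → ∀ k : Fin n, k < j →
        (((Finset.Ico k j).filter (fun i => σ j < σ i)).card : ℝ) ≤
          (1/2 + 2*ε') * (((j : ℕ) : ℝ) - ((k : ℕ) : ℝ))) :
    (n : ℝ) - (R'.card : ℝ) / (1/2 - 2*ε') ≤ (lisLen σ : ℝ) ∧
      (edDist σ : ℝ) ≤ (R'.card : ℝ) / (1/2 - 2*ε') := by
  classical
  have hpos : (0:ℝ) < 1/2 - 2*ε' := by linarith
  -- Find the key set S
  have key : ∃ S : Finset (Fin n), MonoOn σ S ∧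
      (1/2 - 2*ε') * ((n : ℝ) - (S.card : ℝ)) ≤ (R'.card : ℝ) := by
    by_cases hR : ∀ i : Fin n, i ∈ R'
    · refine ⟨∅, fun i hi => absurd hi (Finset.notMem_empty i), ?_⟩
      have : R'.card = n := by
        have : R' = Finset.univ := Finset.eq_univ_iff_forall.mpr hR
        rw [this, Finset.card_univ, Fintype.card_fin]
      rw [this, Finset.card_empty]
      push_cast
      nlinarith [Nat.cast_nonneg (α := ℝ) n]
    · push_neg at hR
      set D : Finset (Fin n) := Finset.univ.filter (fun i => i ∉ R') with hD
      have hDne : D.Nonempty := by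
        obtain ⟨i, hi⟩ := hR
        exact ⟨i, by rw [hD, Finset.mem_filter]; exact ⟨Finset.mem_univ i, hi⟩⟩
      set x : Fin n := D.max' hDne with hxdef
      have hxmem : x ∈ D := D.max'_mem hDne
      rw [hD, Finset.mem_filter] at hxmem
      have hx : x ∉ R' := hxmem.2
      have hmaxx : ∀ i : Fin n, i ∉ R' → i ≤ x := by
        intro i hi
        exact Finset.le_max' D i (by rw [hD, Finset.mem_filter]; exact ⟨Finset.mem_univ i, hi⟩)
      obtain ⟨S, hxS, hSle, hmono, hbound⟩ := main_aux σ ε' R' h (x : ℕ) x rfl hx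
      refine ⟨S, hmono, ?_⟩
      -- everything above x is in R'
      have htop : Finset.Ioi x ⊆ R'.filter (fun i => x < i) := by
        intro i hi
        rw [Finset.mem_Ioi] at hi
        rw [Finset.mem_filter]
        refine ⟨?_, hi⟩
        by_contra hiR
        exact absurd (hmaxx i hiR) (not_le.mpr hi)
      have htopcard : (n : ℝ) - ((x:ℕ):ℝ) - 1 ≤ ((R'.filter (fun i => x < i)).card : ℝ) := by
        have h1 : (Finset.Ioi x).card = n - 1 - (x:ℕ) := by rw [Fin.card_Ioi]
        have h2 : (Finset.Ioi x).card ≤ (R'.filter (fun i => x < i)).card :=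
          Finset.card_le_card htop
        have h3 : n - 1 - (x:ℕ) ≤ (R'.filter (fun i => x < i)).card := h1 ▸ h2
        have hxn : (x:ℕ) < n := x.isLt
        have h4 : ((n - 1 - (x:ℕ) : ℕ) : ℝ) = (n:ℝ) - 1 - ((x:ℕ):ℝ) ∨
            (n:ℝ) - ((x:ℕ):ℝ) - 1 ≤ 0 := by
          rcases Nat.lt_or_ge ((x:ℕ)+1) n with hlt | hge
          · left
            rw [Nat.cast_sub (by omega), Nat.cast_sub (by omega)]
            push_cast; ring
          · right
            have hn : (n:ℝ) = ((x:ℕ):ℝ) + 1 := by exact_mod_cast (by omega : n = (x:ℕ) + 1)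
            linarith
        rcases h4 with h4 | h4
        · have h5 : ((n - 1 - (x:ℕ) : ℕ) : ℝ) ≤ ((R'.filter (fun i => x < i)).card : ℝ) := by
            exact_mod_cast h3
          linarith
        · have := Nat.cast_nonneg (α := ℝ) (R'.filter (fun i => x < i)).card
          linarith
      have hsum : (R'.filter (fun i => i ≤ x)).card + (R'.filter (fun i => x < i)).card
          = R'.card := by
        have := Finset.card_filter_add_card_filter_not
          (s := R') (p := fun i => i ≤ x)
        simpa [not_le] using this
      have hsum' : ((R'.filter (fun i => i ≤ x)).card : ℝ) +
          ((R'.filter (fun i => x < i)).card : ℝ) = (R'.card : ℝ) := by exact_mod_cast hsum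
      have hx1 : ((x:ℕ):ℝ) + 1 ≤ (n : ℝ) := by
        have := x.isLt; exact_mod_cast this
      have step : (1/2 - 2*ε') * ((n : ℝ) - (S.card : ℝ)) =
          (1/2 - 2*ε') * (((x:ℕ):ℝ) + 1 - (S.card : ℝ)) +
          (1/2 - 2*ε') * ((n : ℝ) - ((x:ℕ):ℝ) - 1) := by ring
      rw [step]
      have hterm2 : (1/2 - 2*ε') * ((n : ℝ) - ((x:ℕ):ℝ) - 1) ≤
          ((R'.filter (fun i => x < i)).card : ℝ) := by
        have hnn : (0:ℝ) ≤ (n : ℝ) - ((x:ℕ):ℝ) - 1 := by linarith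
        nlinarith
      linarith
  obtain ⟨S, hmono, hbound⟩ := key
  have hScard : (S.card : ℝ) ≤ (n : ℝ) := by
    have := S.card_le_univ
    simp only [Finset.card_univ, Fintype.card_fin] at this
    exact_mod_cast this
  have hlis : (S.card : ℕ) ≤ lisLen σ := by
    apply le_csSup
    · refine ⟨n, ?_⟩
      rintro k ⟨T, hT, -⟩
      have := T.card_le_univ
      simp only [Finset.card_univ, Fintype.card_fin] at this
      omega
    · exact ⟨S, rfl, hmono⟩
  have hed : edDist σ ≤ Sᶜ.card := by
    apply Nat.sInf_le
    refine ⟨Sᶜ, rfl, ?_⟩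
    rw [compl_compl]
    exact hmono
  have hcompl : (Sᶜ.card : ℝ) = (n : ℝ) - (S.card : ℝ) := by
    rw [Finset.card_compl, Fintype.card_fin]
    have hle : S.card ≤ n := by exact_mod_cast hScard
    rw [Nat.cast_sub hle]
  constructor
  · have h1 : (n : ℝ) - (S.card : ℝ) ≤ (R'.card : ℝ) / (1/2 - 2*ε') := by
      rw [le_div_iff₀ hpos]
      linarith [hbound]
    have h2 : ((S.card : ℕ) : ℝ) ≤ (lisLen σ : ℝ) := by exact_mod_cast hlis
    linarith
  · have h1 : (Sᶜ.card : ℝ) ≤ (R'.card : ℝ) / (1/2 - 2*ε') := by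
      rw [le_div_iff₀ hpos, hcompl]
      linarith [hbound]
    have h2 : ((edDist σ : ℕ) : ℝ) ≤ (Sᶜ.card : ℝ) := by exact_mod_cast hed
    linarith
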